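/- For every labeled rooted plane tree T in L'_n, the digraph g(T) on vertex set {1,...,n} — with edges (T_(x,i), T_(x,i+1)) for consecutive children of any vertex x, edge (last child of 0, first child of 0), and for x ≠ 0 edges (last child of x, x) and (x, first child of x) — has exactly one Eulerian tour up to cyclic shift. -/

import Mathlib

/-- A labeled rooted plane tree: a root label together with a linearly ordered list of
subtrees. -/
inductive PTree : Type where
  | node : ℕ → List PTree → PTree

/-- The label of the root of the tree. -/
def PTree.label : PTree → ℕ
  | .node a _ => a

/-- The ordered list of children of the root. -/
def PTree.children : PTree → List PTree
  | .node _ ts => ts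

mutual
/-- The list of all labels occurring in the tree. -/
def PTree.labels : PTree → List ℕ
  | .node a ts => a :: labelsList ts
/-- The list of all labels occurring in a forest. -/
def labelsList : List PTree → List ℕ
  | [] => []
  | t :: ts => t.labels ++ labelsList ts
end

/-- `T` is a member of `Lₙ`: a labeled rooted plane tree with `n+1` vertices labeled
bijectively by `{0,…,n}`, whose root is labeled `0` and whose leftmost root-child is
labeled `1`. -/
def InL (n : ℕ) (T : PTree) : Prop :=
  T.labels.Nodup ∧ (∀ k : ℕ, k ∈ T.labels ↔ k ≤ n) ∧ T.label = 0 ∧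
    ∃ t ts, T = .node 0 (t :: ts) ∧ t.label = 1

/-- `T` is a member of `L'ₙ ⊆ Lₙ`: additionally, the vertex labeled `2` lies in the
subtree rooted at the vertex labeled `1` (the leftmost child of the root). -/
def InL' (n : ℕ) (T : PTree) : Prop :=
  InL n T ∧ ∃ t ts, T = .node 0 (t :: ts) ∧ 2 ∈ t.labels

/-- The list of directed edges traversed by the cyclic sequence of vertices `l`
(consecutive pairs, including the closing pair from the last to the first vertex). -/
def cyclicPairs {V : Type*} (l : List V) : List (V × V) := l.zip (l.rotate 1)

/-- `l` is an Eulerian tour of the digraph with edge set `E`: the cyclically consecutive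
pairs of `l` are pairwise distinct and are exactly the edges of `E`. -/
def IsEulerTour {V : Type*} [DecidableEq V] (E : Finset (V × V)) (l : List V) : Prop :=
  l ≠ [] ∧ (cyclicPairs l).Nodup ∧ (cyclicPairs l).toFinset = E

/-- The digraph with edge set `E` has exactly one Eulerian tour up to cyclic shift. -/
def UniqueEulerTour {V : Type*} [DecidableEq V] (E : Finset (V × V)) : Prop :=
  ∃ l, IsEulerTour E l ∧ ∀ l', IsEulerTour E l' → l'.IsRotated l

def Loopless {V : Type*} (E : Finset (V × V)) : Prop := ∀ e ∈ E, e.1 ≠ e.2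

def NoIsolated {V : Type*} (E : Finset (V × V)) : Prop :=
  ∀ v : V, ∃ e ∈ E, e.1 = v ∨ e.2 = v

def outdeg {V : Type*} [DecidableEq V] (E : Finset (V × V)) (v : V) : ℕ :=
  (E.filter (fun p => p.1 = v)).card

def indeg {V : Type*} [DecidableEq V] (E : Finset (V × V)) (v : V) : ℕ :=
  (E.filter (fun p => p.2 = v)).card

/-- `l` is an oriented simple path from `u` to `v` using edges of `E`. -/
def IsPathIn {V : Type*} (E : Finset (V × V)) (u v : V) (l : List V) : Prop :=
  l.Chain' (fun a b => (a, b) ∈ E) ∧ l.head? = some u ∧ l.getLast? = some v ∧ l.Nodup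

/-- `l` (read cyclically) is a simple oriented cycle of the digraph `E`. -/
def IsSimpleCycleList {V : Type*} (E : Finset (V × V)) (l : List V) : Prop :=
  l ≠ [] ∧ l.Nodup ∧ ∀ p ∈ cyclicPairs l, p ∈ E

mutual
/-- The edges of `g(T)` contributed at each vertex: consecutive children are joined
left to right; the children of the root `0` are closed into a cycle (last child to
first child, when there are at least two children); for a non-root vertex `x` with
children, the edges (last child of `x`, `x`) and (`x`, first child of `x`) are added. -/
def gEdges : Bool → PTree → List (ℕ × ℕ)
  | isRoot, .node a ts =>
    (if ts.isEmpty then []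
     else if isRoot then
       (if ts.length ≤ 1 then [] else cyclicPairs (ts.map PTree.label))
     else cyclicPairs (a :: ts.map PTree.label)) ++ gEdgesList ts
def gEdgesList : List PTree → List (ℕ × ℕ)
  | [] => []
  | t :: ts => gEdges false t ++ gEdgesList ts
end

/-- The digraph `g(T)` on the vertex set `{1,…,n}` associated to a tree `T ∈ L'ₙ`. -/
def gDigraph (T : PTree) : Finset (ℕ × ℕ) := (gEdges true T).toFinset



namespace CP
variable {V : Type*}

lemma cp_cons (x : V) (s : List V) : cyclicPairs (x :: s) = (x :: s).zip (s ++ [x]) := by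
  simp [cyclicPairs, List.rotate_cons_succ]

lemma cp_length (l : List V) : (cyclicPairs l).length = l.length := by
  simp [cyclicPairs]

lemma cp_map_fst (l : List V) : (cyclicPairs l).map Prod.fst = l :=
  List.map_fst_zip (by simp)

lemma cp_map_snd (l : List V) : (cyclicPairs l).map Prod.snd = l.rotate 1 :=
  List.map_snd_zip (by simp)

lemma cp_rotate_one (l : List V) : cyclicPairs (l.rotate 1) = (cyclicPairs l).rotate 1 := by
  match l with
  | [] => simp [cyclicPairs]
  | [x] => simp [cyclicPairs]
  | x :: y :: s =>
    have lhs : cyclicPairs ((x :: y :: s).rotate 1)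
        = (y :: s).zip (s ++ [x]) ++ [x].zip [y] := by
      rw [List.rotate_cons_succ, List.rotate_zero]
      rw [show (y :: s) ++ [x] = y :: (s ++ [x]) by simp, cp_cons]
      rw [show y :: (s ++ [x]) = (y :: s) ++ [x] by simp]
      rw [show (s ++ [x]) ++ [y] = (s ++ [x]) ++ [y] from rfl]
      rw [List.zip_append (by simp)]
    have rhs : (cyclicPairs (x :: y :: s)).rotate 1
        = (y :: s).zip (s ++ [x]) ++ [(x, y)] := by
      rw [cp_cons]
      rw [show (x :: y :: s).zip ((y :: s) ++ [x]) = (x, y) :: (y :: s).zip (s ++ [x]) by simp]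
      rw [List.rotate_cons_succ, List.rotate_zero]
    rw [lhs, rhs]; simp

lemma cp_rotate (l : List V) (n : ℕ) : cyclicPairs (l.rotate n) = (cyclicPairs l).rotate n := by
  induction n with
  | zero => simp
  | succ k ih =>
    have : l.rotate (k+1) = (l.rotate k).rotate 1 := by rw [List.rotate_rotate]
    rw [this, cp_rotate_one, ih, List.rotate_rotate]

lemma cp_nodup {l : List V} (h : l.Nodup) : (cyclicPairs l).Nodup := by
  have h2 : ((cyclicPairs l).map Prod.fst).Nodup := by rw [cp_map_fst]; exact h
  exact List.Nodup.of_map _ h2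

lemma cp_split (v : V) (cl t : List V) :
    cyclicPairs ((v :: cl) ++ (v :: t)) = cyclicPairs (v :: cl) ++ cyclicPairs (v :: t) := by
  rw [show ((v :: cl) ++ (v :: t)) = v :: (cl ++ v :: t) by simp, cp_cons, cp_cons, cp_cons]
  rw [show (v :: (cl ++ v :: t)) = (v :: cl) ++ (v :: t) by simp]
  rw [show (cl ++ v :: t) ++ [v] = (cl ++ [v]) ++ (t ++ [v]) by simp]
  rw [List.zip_append (by simp)]

end CP

namespace CP
variable {V : Type*}

lemma cp_mem_comp {l : List V} {p : V × V} (h : p ∈ cyclicPairs l) : p.1 ∈ l ∧ p.2 ∈ l := by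
  have h2 := List.of_mem_zip h
  exact ⟨h2.1, (List.rotate_perm l 1).mem_iff.mp h2.2⟩

lemma cp_getElem {l : List V} {i : ℕ} (h : i < l.length) :
    (cyclicPairs l)[i]'(by rw [cp_length]; exact h)
      = (l[i], l[(i+1) % l.length]'(Nat.mod_lt _ (by omega))) := by
  have : (cyclicPairs l)[i]'(by rw [cp_length]; exact h)
      = (l[i], (l.rotate 1)[i]'(by simpa using h)) := List.getElem_zip
  rw [this, List.getElem_rotate]

lemma cp_mem_of_consec {l : List V} {i : ℕ} (h : i < l.length) :
    (l[i], l[(i+1) % l.length]'(Nat.mod_lt _ (by omega))) ∈ cyclicPairs l := by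
  rw [← cp_getElem h]
  exact List.getElem_mem _

lemma zip_fst_unique {l : List V} {r : List V} (hl : l.Nodup) {p q : V × V}
    (hp : p ∈ l.zip r) (hq : q ∈ l.zip r) (h : p.1 = q.1) : p = q := by
  obtain ⟨i, hi, rfl⟩ := List.mem_iff_getElem.mp hp
  obtain ⟨j, hj, rfl⟩ := List.mem_iff_getElem.mp hq
  have hi' : i < l.length := lt_of_lt_of_le hi (by simp [List.length_zip])
  have hj' : j < l.length := lt_of_lt_of_le hj (by simp [List.length_zip])
  have h1 : (l.zip r)[i].1 = l[i] := by rw [List.getElem_zip]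
  have h2 : (l.zip r)[j].1 = l[j] := by rw [List.getElem_zip]
  have : i = j := (hl.getElem_inj_iff).mp (by rw [← h1, ← h2, h])
  subst this; rfl

lemma cp_fst_unique {l : List V} (hl : l.Nodup) {p q : V × V}
    (hp : p ∈ cyclicPairs l) (hq : q ∈ cyclicPairs l) (h : p.1 = q.1) : p = q :=
  zip_fst_unique hl hp hq h

lemma cp_loopless {l : List V} (hl : l.Nodup) (h2 : 2 ≤ l.length) {p : V × V}
    (hp : p ∈ cyclicPairs l) : p.1 ≠ p.2 := by
  obtain ⟨i, hi, rfl⟩ := List.mem_iff_getElem.mp hp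
  have hi' : i < l.length := lt_of_lt_of_le hi (le_of_eq (cp_length l))
  rw [cp_getElem hi']
  intro hc
  have := (hl.getElem_inj_iff).mp hc
  have hne : (i+1) % l.length ≠ i := by
    rcases Nat.lt_or_ge (i+1) l.length with h | h
    · rw [Nat.mod_eq_of_lt h]; omega
    · have : i + 1 = l.length := by omega
      rw [this, Nat.mod_self]; omega
  exact hne this.symm

lemma cp_comp_in_tail {v : V} {cl : List V} (hc : cl ≠ []) {p : V × V}
    (hp : p ∈ cyclicPairs (v :: cl)) : p.1 ∈ cl ∨ p.2 ∈ cl := by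
  obtain ⟨w, cl', rfl⟩ := List.exists_cons_of_ne_nil hc
  rw [cp_cons, show (w :: cl') ++ [v] = w :: (cl' ++ [v]) by simp,
    List.zip_cons_cons, List.mem_cons] at hp
  rcases hp with hp | hp
  · right; rw [hp]; simp
  · left; exact (List.of_mem_zip hp).1

lemma cp_head {x y : V} {s : List V} : (x, y) ∈ cyclicPairs (x :: y :: s) := by
  rw [cp_cons]; simp

lemma exists_rotate_mem {l : List V} {x : V} (h : x ∈ l) : ∃ n t, l.rotate n = x :: t := by
  obtain ⟨i, hi, rfl⟩ := List.mem_iff_getElem.mp h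
  refine ⟨i, List.drop (i+1) l ++ List.take i l, ?_⟩
  rw [List.rotate_eq_drop_append_take (le_of_lt hi), List.drop_eq_getElem_cons hi,
    List.cons_append]

lemma exists_rotate_edge {L : List V} {a b : V} (hab : a ≠ b)
    (h : (a, b) ∈ cyclicPairs L) : ∃ n s, L.rotate n = a :: b :: s := by
  obtain ⟨i, hi, hget⟩ := List.mem_iff_getElem.mp h
  have hi' : i < L.length := lt_of_lt_of_le hi (le_of_eq (cp_length L))
  rw [cp_getElem hi'] at hget
  have ha : L[i] = a := by rw [Prod.ext_iff] at hget; exact hget.1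
  have hb : L[(i+1) % L.length]'(Nat.mod_lt _ (by omega)) = b := by
    rw [Prod.ext_iff] at hget; exact hget.2
  have hrot : L.rotate i = L[i] :: (List.drop (i+1) L ++ List.take i L) := by
    rw [List.rotate_eq_drop_append_take (le_of_lt hi'), List.drop_eq_getElem_cons hi',
      List.cons_append]
  rcases Nat.lt_or_ge (i+1) L.length with hlt | hge
  · have hb' : L[i+1] = b := by rw [← hb]; congr 1; exact (Nat.mod_eq_of_lt hlt).symm
    rw [List.drop_eq_getElem_cons hlt, List.cons_append] at hrot
    exact ⟨i, L.drop (i+1+1) ++ L.take i, by rw [hrot, ha, hb']⟩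
  · have hlen : i + 1 = L.length := by omega
    have hb0 : L[0]'(by omega) = b := by
      rw [← hb]; congr 1; rw [hlen, Nat.mod_self]
    have hipos : 0 < i := by
      rcases Nat.eq_zero_or_pos i with h0 | h0
      · exfalso; apply hab
        rw [← ha, ← hb0]; simp [h0]
      · exact h0
    obtain ⟨j, rfl⟩ : ∃ j, i = j + 1 := ⟨i - 1, by omega⟩
    obtain ⟨y, L', rfl⟩ : ∃ y L', L = y :: L' := by
      cases L with
      | nil => simp at hi'
      | cons y L' => exact ⟨y, L', rfl⟩
    have hdrop : List.drop (j+1+1) (y :: L') = [] := List.drop_eq_nil_of_le (by omega)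
    have htake : List.take (j+1) (y :: L') = y :: List.take j L' :=
      List.take_succ_cons
    rw [hdrop, List.nil_append, htake] at hrot
    have hyb : y = b := by rw [← hb0]; rfl
    exact ⟨j+1, L'.take j, by rw [hrot, ha, hyb]⟩

lemma chain'_cp (l : List V) : List.Chain' (fun x y => (x, y) ∈ cyclicPairs l) l := by
  rw [List.Chain', List.isChain_iff_getElem]
  intro i hlt
  have h1 : i + 1 < l.length := by omega
  have : l[i+1] = l[(i+1) % l.length]'(Nat.mod_lt _ (by omega)) := by
    congr 1; exact (Nat.mod_eq_of_lt h1).symm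
  rw [this]
  exact cp_mem_of_consec (by omega)

lemma chain'_cp_shift (v : V) (cl : List V) :
    List.Chain' (fun x y => (x, y) ∈ cyclicPairs (v :: cl)) (cl ++ [v]) := by
  have h := chain'_cp ((v :: cl).rotate 1)
  rw [List.rotate_cons_succ, List.rotate_zero] at h
  refine h.imp ?_
  intro a b hab
  have e : cyclicPairs (cl ++ [v]) = (cyclicPairs (v :: cl)).rotate 1 := by
    rw [← cp_rotate_one]
    congr 1
    rw [List.rotate_cons_succ, List.rotate_zero]
  rw [e] at hab
  exact (List.rotate_perm _ _).mem_iff.mp hab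

end CP

namespace CP
variable {V : Type*} [DecidableEq V]

lemma euler_mem_E {E : Finset (V × V)} {l : List V} (h : IsEulerTour E l) {p : V × V}
    (hp : p ∈ cyclicPairs l) : p ∈ E := by
  rw [← h.2.2]; exact List.mem_toFinset.mpr hp

lemma euler_of_E {E : Finset (V × V)} {l : List V} (h : IsEulerTour E l) {p : V × V}
    (hp : p ∈ E) : p ∈ cyclicPairs l := by
  rw [← h.2.2] at hp; exact List.mem_toFinset.mp hp

lemma euler_rotate {E : Finset (V × V)} {l : List V} (h : IsEulerTour E l) (n : ℕ) :
    IsEulerTour E (l.rotate n) := by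
  obtain ⟨h1, h2, h3⟩ := h
  refine ⟨by simpa using h1, ?_, ?_⟩
  · rw [cp_rotate]; exact ((List.rotate_perm _ _).nodup_iff).mpr h2
  · rw [cp_rotate, ← h3]
    exact List.toFinset_eq_of_perm _ _ (List.rotate_perm _ _)

lemma euler_length {E : Finset (V × V)} {l : List V} (h : IsEulerTour E l) :
    l.length = E.card := by
  rw [← h.2.2, List.toFinset_card_of_nodup h.2.1, cp_length]

lemma count_eq_indeg {E : Finset (V × V)} {l : List V} (h : IsEulerTour E l) (x : V) :
    l.count x = indeg E x := by
  have h1 : indeg E x = ((cyclicPairs l).filter (fun p => p.2 = x)).length := by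
    rw [indeg, ← h.2.2]
    have e : Finset.filter (fun p => p.2 = x) (cyclicPairs l).toFinset
        = ((cyclicPairs l).filter (fun p => p.2 = x)).toFinset := by
      ext q; simp [List.mem_filter]
    rw [e, List.toFinset_card_of_nodup (h.2.1.filter _)]
  rw [h1]
  have h2 : ((cyclicPairs l).filter (fun p => p.2 = x)).length
      = (cyclicPairs l).countP (fun p => p.2 = x) := List.countP_eq_length_filter.symm
  rw [h2]
  have h3 : (cyclicPairs l).countP (fun p => p.2 = x)
      = ((cyclicPairs l).map Prod.snd).countP (fun y => y = x) := by
    rw [List.countP_map]; rfl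
  rw [h3, cp_map_snd]
  have h4 : (l.rotate 1).countP (fun y => y = x) = (l.rotate 1).count x := by
    rw [List.count_eq_countP]
    apply List.countP_congr
    intro y _
    simp
  rw [h4]
  exact ((List.rotate_perm l 1).count_eq x).symm

lemma count_eq_outdeg {E : Finset (V × V)} {l : List V} (h : IsEulerTour E l) (x : V) :
    l.count x = outdeg E x := by
  have h1 : outdeg E x = ((cyclicPairs l).filter (fun p => p.1 = x)).length := by
    rw [outdeg, ← h.2.2]
    have e : Finset.filter (fun p => p.1 = x) (cyclicPairs l).toFinset
        = ((cyclicPairs l).filter (fun p => p.1 = x)).toFinset := by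
      ext q; simp [List.mem_filter]
    rw [e, List.toFinset_card_of_nodup (h.2.1.filter _)]
  rw [h1, ← List.countP_eq_length_filter]
  have h3 : (cyclicPairs l).countP (fun p => p.1 = x)
      = ((cyclicPairs l).map Prod.fst).countP (fun y => y = x) := by
    rw [List.countP_map]; rfl
  rw [h3, cp_map_fst, List.count_eq_countP]
  apply (List.countP_congr _).symm
  intro y _
  simp

lemma march {E : Finset (V × V)} (cl : List V) :
    ∀ (L s : List V) (a : V), (∀ p ∈ cyclicPairs L, p ∈ E) →
      List.Chain' (fun x y => ∀ w, (x, w) ∈ E → w = y) (a :: cl) →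
      L = a :: s → cl.length ≤ s.length → ∃ s', s = cl ++ s' := by
  induction cl with
  | nil => intro L s a _ _ _ _; exact ⟨s, by simp⟩
  | cons b cl' ih =>
    intro L s a hsub hch hL hlen
    obtain ⟨w, s₂, rfl⟩ : ∃ w s₂, s = w :: s₂ := by
      cases s with
      | nil => simp at hlen
      | cons w s₂ => exact ⟨w, s₂, rfl⟩
    have hmem : (a, w) ∈ E := hsub _ (hL ▸ cp_head)
    have hforced : ∀ z, (a, z) ∈ E → z = b := (List.isChain_cons_cons.mp hch).1
    have hwb : w = b := hforced w hmem
    rw [hwb] at hL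
    have hrot : L.rotate 1 = b :: (s₂ ++ [a]) := by
      rw [hL, List.rotate_cons_succ, List.rotate_zero, List.cons_append]
    have hsub' : ∀ p ∈ cyclicPairs (L.rotate 1), p ∈ E := by
      intro p hp
      rw [cp_rotate] at hp
      exact hsub p ((List.rotate_perm _ _).mem_iff.mp hp)
    obtain ⟨s'', hs''⟩ := ih (L.rotate 1) (s₂ ++ [a]) b hsub'
      (List.isChain_cons_cons.mp hch).2 hrot (by simp at hlen ⊢; omega)
    rcases List.eq_nil_or_concat s'' with h0 | ⟨s₃, x, hx⟩
    · exfalso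
      have := congrArg List.length hs''
      simp [h0] at this
      simp at hlen
      omega
    · rw [hx] at hs''
      have : s₂ ++ [a] = (cl' ++ s₃) ++ [x] := by rw [hs'']; simp [List.concat_eq_append]
      obtain ⟨h5, _⟩ := List.append_inj' this (by simp)
      exact ⟨s₃, by rw [hwb, h5]; simp⟩

lemma rotate_head_count_eq {v : V} {t t'' : List V}
    (h : (v :: t).IsRotated (v :: t'')) (hc : (v :: t).count v = 1) : t = t'' := by
  obtain ⟨n, hn⟩ := h
  rw [← List.rotate_mod] at hn
  have hmlt0 : n % (v :: t).length < (v :: t).length := Nat.mod_lt _ (by simp)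
  generalize hgen : n % (v :: t).length = m at hn hmlt0
  have hmlt : m < (v :: t).length := hmlt0
  have hvt : v ∉ t := by
    intro hmem
    have h2 : 0 < t.count v := List.count_pos_iff.mpr hmem
    rw [List.count_cons_self] at hc
    omega
  rcases Nat.eq_zero_or_pos m with h0 | h0
  · rw [h0, List.rotate_zero] at hn
    injection hn
  · exfalso
    have hrw : (v :: t).rotate m
        = (v :: t)[m] :: (List.drop (m+1) (v :: t) ++ List.take m (v :: t)) := by
      rw [List.rotate_eq_drop_append_take (le_of_lt hmlt), List.drop_eq_getElem_cons hmlt,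
        List.cons_append]
    rw [hrw] at hn
    have hhd : (v :: t)[m] = v := by injection hn
    obtain ⟨j, rfl⟩ : ∃ j, m = j + 1 := ⟨m - 1, by omega⟩
    have hj : j < t.length := by simp at hmlt; omega
    have : t[j] = v := hhd
    exact hvt (this ▸ List.getElem_mem hj)

end CP

namespace CP
variable {V : Type*} [DecidableEq V]

omit [DecidableEq V] in
lemma chain'_cp_shift' (v : V) (cl : List V) :
    List.Chain' (fun x y => (x, y) ∈ cyclicPairs (v :: cl) ∧ x ∈ cl) (cl ++ [v]) := by
  rw [List.Chain', List.isChain_iff_getElem]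
  intro i hlt
  simp only [List.length_append, List.length_singleton] at hlt
  have hic : i < cl.length := by omega
  have hx : (cl ++ [v])[i]'(by simp; omega) = cl[i]'(hic) := List.getElem_append_left hic
  constructor
  · -- pair membership
    have hkey := cp_mem_of_consec (l := v :: cl) (i := i + 1) (by simp; omega)
    have h1 : (v :: cl)[i+1]'(by simp; omega) = cl[i]'(hic) := rfl
    rcases Nat.lt_or_ge (i + 1) cl.length with hlt2 | hge2
    · have hy : (cl ++ [v])[i+1]'(by simp; omega) = cl[i+1]'(hlt2) := List.getElem_append_left hlt2
      have h2 : (v :: cl)[(i+1+1) % (v :: cl).length]'(Nat.mod_lt _ (by simp)) = cl[i+1]'(hlt2) := by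
        have : (i+1+1) % (v :: cl).length = i + 2 := by
          apply Nat.mod_eq_of_lt; simp; omega
        simp only [this]; rfl
      rw [hx, hy]
      rw [h1, h2] at hkey
      exact hkey
    · have hieq : i + 1 = cl.length := by omega
      have hy : (cl ++ [v])[i+1]'(by simp; omega) = v := by
        rw [List.getElem_append_right (by omega)]
        simp [hieq]
      have h2 : (v :: cl)[(i+1+1) % (v :: cl).length]'(Nat.mod_lt _ (by simp)) = v := by
        have : (i+1+1) % (v :: cl).length = 0 := by simp [hieq]
        simp only [this]; rfl
      rw [hx, hy]
      rw [h1, h2] at hkey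
      exact hkey
  · rw [hx]; exact List.getElem_mem hic

lemma spliceLemma {E' : Finset (V × V)} {v : V} {cl : List V}
    (hc : cl ≠ []) (hnd : (v :: cl).Nodup)
    (hfresh : ∀ p ∈ E', p.1 ∉ cl ∧ p.2 ∉ cl)
    (hloop : Loopless E') (hindeg : indeg E' v = 1)
    (hU : UniqueEulerTour E') :
    UniqueEulerTour (E' ∪ (cyclicPairs (v :: cl)).toFinset) ∧
      Loopless (E' ∪ (cyclicPairs (v :: cl)).toFinset) := by
  classical
  set cyc := cyclicPairs (v :: cl) with hcycdef
  set E : Finset (V × V) := E' ∪ cyc.toFinset with hEdef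
  have hlen2 : 2 ≤ (v :: cl).length := by
    cases cl with
    | nil => exact absurd rfl hc
    | cons _ _ => simp
  have hcyc_nd : cyc.Nodup := cp_nodup hnd
  have hcyc_comp : ∀ p ∈ cyc, p.1 ∈ cl ∨ p.2 ∈ cl := fun p hp => cp_comp_in_tail hc hp
  have hloopE : Loopless E := by
    intro e he
    rcases Finset.mem_union.mp he with h | h
    · exact hloop e h
    · exact cp_loopless hnd hlen2 (List.mem_toFinset.mp h)
  -- the canonical tour of E'
  obtain ⟨w₀, hw₀, huniq₀⟩ := hU
  have hcount₀ : w₀.count v = 1 := by rw [count_eq_indeg hw₀, hindeg]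
  have hvmem : v ∈ w₀ := by
    have : 0 < w₀.count v := by omega
    exact List.count_pos_iff.mp this
  obtain ⟨k, t, hkt⟩ := exists_rotate_mem hvmem
  have hl₀ : IsEulerTour E' (v :: t) := hkt ▸ euler_rotate hw₀ k
  have huniq : ∀ l', IsEulerTour E' l' → l'.IsRotated (v :: t) := by
    intro l' hl'
    exact (huniq₀ l' hl').trans ⟨k, hkt⟩
  have hcountl₀ : (v :: t).count v = 1 := by
    rw [← hkt, ((List.rotate_perm w₀ k).count_eq v)]; exact hcount₀
  -- disjointness facts
  have hE'cl : ∀ p ∈ E', p ∉ cyc := by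
    intro p hp hpc
    rcases hcyc_comp p hpc with h | h
    · exact (hfresh p hp).1 h
    · exact (hfresh p hp).2 h
  have hdisjF : Disjoint E' cyc.toFinset := by
    rw [Finset.disjoint_left]
    intro p hp hpc
    exact hE'cl p hp (List.mem_toFinset.mp hpc)
  have hl₀sub : ∀ p ∈ cyclicPairs (v :: t), p ∈ E' := fun p hp => euler_mem_E hl₀ hp
  have hdisjL : List.Disjoint cyc (cyclicPairs (v :: t)) := by
    intro p hp hpt
    exact hE'cl p (hl₀sub p hpt) hp
  -- the canonical tour of E
  have hL₀ : IsEulerTour E ((v :: cl) ++ (v :: t)) := by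
    refine ⟨by simp, ?_, ?_⟩
    · rw [cp_split]
      exact List.Nodup.append hcyc_nd hl₀.2.1 hdisjL
    · rw [cp_split, List.toFinset_append, hl₀.2.2, hEdef, Finset.union_comm]
  -- cardinality facts
  have hcyclen : cyc.toFinset.card = cl.length + 1 := by
    rw [List.toFinset_card_of_nodup hcyc_nd, hcycdef, cp_length]; simp
  have hcardE : E.card = E'.card + (cl.length + 1) := by
    rw [hEdef, Finset.card_union_of_disjoint hdisjF, hcyclen]
  have hE'pos : 1 ≤ E'.card := by
    have := Finset.card_filter_le E' (fun p => p.2 = v)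
    rw [← indeg] at this  -- indeg E' v ≤ E'.card
    omega
  refine ⟨⟨(v :: cl) ++ (v :: t), hL₀, ?_⟩, hloopE⟩
  -- uniqueness
  intro L hL
  obtain ⟨c1, ct, rfl⟩ : ∃ c1 ct, cl = c1 :: ct := by
    cases cl with
    | nil => exact absurd rfl hc
    | cons c1 ct => exact ⟨c1, ct, rfl⟩
  have hvc1 : v ≠ c1 := by
    intro h; apply (List.nodup_cons.mp hnd).1; rw [h]; simp
  have hedge : (v, c1) ∈ cyclicPairs L := by
    apply euler_of_E hL
    rw [hEdef]
    apply Finset.mem_union_right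
    exact List.mem_toFinset.mpr cp_head
  obtain ⟨n, r, hrotn⟩ := exists_rotate_edge hvc1 hedge
  have hL' : IsEulerTour E (v :: c1 :: r) := hrotn ▸ euler_rotate hL n
  -- lengths
  have hLlen : r.length = E'.card + ct.length := by
    have h1 := euler_length hL'
    simp only [List.length_cons] at h1
    have : (c1 :: ct).length + 1 = ct.length + 2 := by simp
    omega
  -- forced march
  have hchainR := chain'_cp_shift' v (c1 :: ct)
  have hchain : List.Chain' (fun x y => ∀ w, (x, w) ∈ E → w = y) ((c1 :: ct) ++ [v]) := by
    refine hchainR.imp ?_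
    rintro a b ⟨hab, hac⟩ w hw
    rcases Finset.mem_union.mp hw with h | h
    · exact absurd hac (hfresh _ h).1
    · have := cp_fst_unique hnd (List.mem_toFinset.mp h) hab rfl
      rw [Prod.ext_iff] at this
      exact this.2
  have hrot1 : (v :: c1 :: r).rotate 1 = c1 :: (r ++ [v]) := by
    rw [List.rotate_cons_succ, List.rotate_zero, List.cons_append]
  have hsub'' : ∀ p ∈ cyclicPairs ((v :: c1 :: r).rotate 1), p ∈ E := by
    intro p hp
    rw [cp_rotate] at hp
    exact euler_mem_E hL' ((List.rotate_perm _ _).mem_iff.mp hp)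
  obtain ⟨s', hs'⟩ := march (ct ++ [v]) _ (r ++ [v]) c1 hsub''
    (by simpa using hchain) hrot1 (by simp; omega)
  rcases List.eq_nil_or_concat s' with h0 | ⟨s₃, x, hx⟩
  · exfalso
    have := congrArg List.length hs'
    simp [h0] at this
    omega
  · rw [hx] at hs'
    have heq : r ++ [v] = (ct ++ v :: s₃) ++ [x] := by
      rw [hs']; simp [List.concat_eq_append]
    obtain ⟨hr, hxv⟩ := List.append_inj' heq (by simp)
    have hxv' : x = v := by injection hxv.symm
    -- L.rotate n = (v :: c1 :: ct) ++ (v :: s₃)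
    have hM : (v :: c1 :: r) = (v :: c1 :: ct) ++ (v :: s₃) := by
      rw [hr]; simp
    rw [hM] at hL'
    have hsplit : cyclicPairs ((v :: c1 :: ct) ++ (v :: s₃))
        = cyc ++ cyclicPairs (v :: s₃) := cp_split v (c1 :: ct) s₃
    have hndM := hL'.2.1
    rw [hsplit] at hndM
    obtain ⟨-, hnds₃, hdisjM⟩ := List.nodup_append.mp hndM
    have hP : (cyclicPairs (v :: s₃)).toFinset = E' := by
      apply Finset.ext
      intro e
      constructor
      · intro he
        have hel := List.mem_toFinset.mp he
        have heE : e ∈ E := euler_mem_E hL' (by rw [hsplit]; exact List.mem_append_right _ hel)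
        rcases Finset.mem_union.mp heE with h | h
        · exact h
        · exfalso
          exact hdisjM _ (List.mem_toFinset.mp h) _ hel rfl
      · intro he
        have heE : e ∈ E := Finset.mem_union_left _ he
        have := euler_of_E hL' heE
        rw [hsplit] at this
        rcases List.mem_append.mp this with h | h
        · exact absurd h (hE'cl e he)
        · exact List.mem_toFinset.mpr h
    have hEuler' : IsEulerTour E' (v :: s₃) := ⟨by simp, hnds₃, hP⟩
    have hrots₃ : (v :: s₃).IsRotated (v :: t) := huniq _ hEuler'
    have hcnt : (v :: s₃).count v = 1 := by
      rw [(hrots₃.perm).count_eq]; exact hcountl₀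
    have hst : s₃ = t := rotate_head_count_eq hrots₃ hcnt
    rw [hst] at hM
    exact ⟨n, by rw [hrotn, hM]⟩

end CP

namespace CP

def innerLabels : List PTree → List ℕ
  | [] => []
  | t :: ts => labelsList t.children ++ innerLabels ts

lemma labels_eq (a : ℕ) (ts : List PTree) : (PTree.node a ts).labels = a :: labelsList ts := rfl

lemma labelsList_append (xs ys : List PTree) :
    labelsList (xs ++ ys) = labelsList xs ++ labelsList ys := by
  induction xs with
  | nil => simp [labelsList]
  | cons t xs ih => simp [labelsList, ih]

lemma label_mem_labels (t : PTree) : t.label ∈ t.labels := by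
  cases t with
  | node a ts => simp [PTree.label, labels_eq]

lemma mem_labelsList_of_mem {t : PTree} {ts : List PTree} (h : t ∈ ts) {x : ℕ}
    (hx : x ∈ t.labels) : x ∈ labelsList ts := by
  induction ts with
  | nil => simp at h
  | cons u us ih =>
    rcases List.mem_cons.mp h with rfl | h
    · simp [labelsList, hx]
    · simp [labelsList, ih h]

lemma map_label_sub {ts : List PTree} {x : ℕ} (h : x ∈ ts.map PTree.label) :
    x ∈ labelsList ts := by
  obtain ⟨t, ht, rfl⟩ := List.mem_map.mp h
  exact mem_labelsList_of_mem ht (label_mem_labels t)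

lemma map_label_nodup {ts : List PTree} (h : (labelsList ts).Nodup) :
    (ts.map PTree.label).Nodup := by
  induction ts with
  | nil => simp
  | cons t ts ih =>
    rw [labelsList] at h
    rw [List.nodup_append] at h
    obtain ⟨h1, h2, h3⟩ := h
    simp only [List.map_cons, List.nodup_cons]
    refine ⟨fun hc => ?_, ih h2⟩
    exact h3 _ (label_mem_labels t) _ (map_label_sub hc) rfl

lemma inner_sub_labels {ts : List PTree} {x : ℕ} (h : x ∈ innerLabels ts) :
    x ∈ labelsList ts := by
  induction ts with
  | nil => simp [innerLabels] at h
  | cons t ts ih =>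
    rw [innerLabels, List.mem_append] at h
    rcases h with h | h
    · apply mem_labelsList_of_mem (List.mem_cons_self (a := t) (l := ts))
      cases t with
      | node a cs => simp [labels_eq, PTree.children] at h ⊢; right; exact h
    · simp [labelsList, ih h]

lemma root_not_inner {ts : List PTree} (h : (labelsList ts).Nodup) {x : ℕ}
    (hx : x ∈ ts.map PTree.label) : x ∉ innerLabels ts := by
  induction ts with
  | nil => simp at hx
  | cons t ts ih =>
    rw [labelsList, List.nodup_append] at h
    obtain ⟨h1, h2, h3⟩ := h
    rw [innerLabels, List.mem_append]
    simp only [List.map_cons, List.mem_cons] at hx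
    rintro (hc | hc)
    · -- x in labels of t.children
      have hcl : x ∈ t.labels := by
        cases t with
        | node a cs => simp [labels_eq, PTree.children] at hc ⊢; right; exact hc
      rcases hx with rfl | hx
      · -- x = t.label
        cases t with
        | node a cs =>
          simp [labels_eq] at h1
          simp [PTree.children] at hc
          exact h1.1 (by simpa [PTree.label] using hc)
      · exact h3 _ hcl _ (map_label_sub hx) rfl
    · rcases hx with rfl | hx
      · exact h3 _ (label_mem_labels t) _ (inner_sub_labels hc) rfl
      · exact ih h2 hx hc

lemma gEdges_false_eq (a : ℕ) (cs : List PTree) (h : cs ≠ []) :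
    gEdges false (PTree.node a cs) = cyclicPairs (a :: cs.map PTree.label) ++ gEdgesList cs := by
  rw [gEdges]
  simp [List.isEmpty_iff, h]

lemma gEdges_false_nil (a : ℕ) : gEdges false (PTree.node a []) = [] := by
  rw [gEdges]; simp [gEdgesList]

lemma gEdgesList_cons (t : PTree) (ts : List PTree) :
    gEdgesList (t :: ts) = gEdges false t ++ gEdgesList ts := rfl

lemma gEdgesList_append (xs ys : List PTree) :
    gEdgesList (xs ++ ys) = gEdgesList xs ++ gEdgesList ys := by
  induction xs with
  | nil => simp [gEdgesList]
  | cons t xs ih => simp [gEdgesList_cons, ih]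

lemma labelsList_length_cons (a : ℕ) (cs : List PTree) (rest : List PTree) :
    (labelsList (PTree.node a cs :: rest)).length
      = 1 + (labelsList (cs ++ rest)).length := by
  simp [labelsList, labels_eq, labelsList_append]
  omega

end CP

namespace CP
variable {V : Type*} [DecidableEq V]

lemma indeg_toFinset {L : List (V × V)} (h : L.Nodup) (x : V) :
    indeg L.toFinset x = (L.map Prod.snd).count x := by
  rw [indeg]
  have e : Finset.filter (fun p => p.2 = x) L.toFinset
      = (L.filter (fun p => p.2 = x)).toFinset := by
    ext q; simp [List.mem_filter]
  rw [e, List.toFinset_card_of_nodup (h.filter _), ← List.countP_eq_length_filter,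
    List.count_eq_countP, List.countP_map]
  apply List.countP_congr
  intro p _
  simp

lemma indeg_union_left {A B : Finset (V × V)} {x : V} (h : ∀ p ∈ B, p.2 ≠ x) :
    indeg (A ∪ B) x = indeg A x := by
  unfold indeg
  rw [Finset.filter_union]
  have : B.filter (fun p => p.2 = x) = ∅ := by
    apply Finset.filter_eq_empty_iff.mpr
    intro p hp
    simp [h p hp]
  rw [this, Finset.union_empty]

lemma indeg_union_right {A B : Finset (V × V)} {x : V} (h : ∀ p ∈ A, p.2 ≠ x) :
    indeg (A ∪ B) x = indeg B x := by
  rw [Finset.union_comm]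
  exact indeg_union_left h

lemma indeg_cyc {l : List V} (h : l.Nodup) {x : V} (hx : x ∈ l) :
    indeg (cyclicPairs l).toFinset x = 1 := by
  rw [indeg_toFinset (cp_nodup h), cp_map_snd, (List.rotate_perm l 1).count_eq]
  exact List.count_eq_one_of_mem h hx

lemma cycle_unique {r : List V} (hnd : r.Nodup) (hlen : 2 ≤ r.length) :
    UniqueEulerTour (cyclicPairs r).toFinset ∧ Loopless (cyclicPairs r).toFinset := by
  constructor
  · have hEr : IsEulerTour (cyclicPairs r).toFinset r :=
      ⟨by intro h; rw [h] at hlen; simp at hlen, cp_nodup hnd, rfl⟩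
    refine ⟨r, hEr, ?_⟩
    intro L hL
    obtain ⟨r0, r1, rt, rfl⟩ : ∃ r0 r1 rt, r = r0 :: r1 :: rt := by
      match r, hlen with
      | r0 :: r1 :: rt, _ => exact ⟨r0, r1, rt, rfl⟩
    have hne : r0 ≠ r1 := by
      intro h; rw [List.nodup_cons] at hnd; exact hnd.1 (h ▸ List.mem_cons_self)
    have hedge : (r0, r1) ∈ cyclicPairs L := euler_of_E hL (List.mem_toFinset.mpr cp_head)
    obtain ⟨n, s, hrot⟩ := exists_rotate_edge hne hedge
    have hL' : IsEulerTour (cyclicPairs (r0 :: r1 :: rt)).toFinset (r0 :: r1 :: s) :=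
      hrot ▸ euler_rotate hL n
    have hlenL : (r0 :: r1 :: s).length = (r0 :: r1 :: rt).length := by
      rw [euler_length hL', List.toFinset_card_of_nodup (cp_nodup hnd), cp_length]
    have hchain : List.Chain' (fun x y => ∀ w, (x, w) ∈ (cyclicPairs (r0 :: r1 :: rt)).toFinset
        → w = y) (r0 :: r1 :: rt) := by
      refine (chain'_cp (r0 :: r1 :: rt)).imp ?_
      intro a b hab w hw
      have := cp_fst_unique hnd (List.mem_toFinset.mp hw) hab rfl
      rw [Prod.ext_iff] at this
      exact this.2
    obtain ⟨s', hs'⟩ := march (r1 :: rt) (r0 :: r1 :: s) (r1 :: s) r0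
      (fun p hp => euler_mem_E hL' hp) hchain rfl (by simp at hlenL ⊢; omega)
    have hs'nil : s' = [] := by
      have := congrArg List.length hs'
      simp at this hlenL
      exact List.eq_nil_of_length_eq_zero (by omega)
    rw [hs'nil, List.append_nil] at hs'
    exact ⟨n, by rw [hrot, hs']⟩
  · intro e he
    exact cp_loopless hnd hlen (List.mem_toFinset.mp he)

end CP

namespace CP

lemma mem_labels_node (a : ℕ) (cs rest : List PTree) (x : ℕ)
    (h : x = a ∨ x ∈ labelsList cs ∨ x ∈ labelsList rest) :
    x ∈ labelsList (PTree.node a cs :: rest) := by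
  simp only [labelsList, labels_eq, List.mem_append, List.mem_cons]
  tauto

lemma gEdgesList_comp : ∀ N ts, (labelsList ts).length ≤ N →
    ∀ p ∈ gEdgesList ts, p.1 ∈ labelsList ts ∧ p.2 ∈ labelsList ts := by
  intro N
  induction N with
  | zero =>
    intro ts hlen p hp
    cases ts with
    | nil => simp [gEdgesList] at hp
    | cons t rest =>
      exfalso
      cases t with
      | node a cs => simp [labelsList, labels_eq] at hlen
  | succ N ih =>
    intro ts hlen p hp
    cases ts with
    | nil => simp [gEdgesList] at hp
    | cons t rest =>
      cases t with
      | node a cs =>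
      have hlen2 : (labelsList (cs ++ rest)).length ≤ N := by
        have := labelsList_length_cons a cs rest
        omega
      have hlencs : (labelsList cs).length ≤ N := by
        rw [labelsList_append] at hlen2
        simp at hlen2; omega
      have hlenrest : (labelsList rest).length ≤ N := by
        rw [labelsList_append] at hlen2
        simp at hlen2; omega
      rw [gEdgesList_cons] at hp
      rcases List.mem_append.mp hp with hp | hp
      · by_cases hcs : cs = []
        · subst hcs; simp [gEdges_false_nil] at hp
        · rw [gEdges_false_eq a cs hcs] at hp
          rcases List.mem_append.mp hp with hp | hp
          · have hc := cp_mem_comp hp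
            constructor
            · apply mem_labels_node
              rcases List.mem_cons.mp hc.1 with h | h
              · left; exact h
              · right; left; exact map_label_sub h
            · apply mem_labels_node
              rcases List.mem_cons.mp hc.2 with h | h
              · left; exact h
              · right; left; exact map_label_sub h
          · have hc := ih cs hlencs p hp
            exact ⟨mem_labels_node _ _ _ _ (Or.inr (Or.inl hc.1)),
              mem_labels_node _ _ _ _ (Or.inr (Or.inl hc.2))⟩
      · have hc := ih rest hlenrest p hp
        exact ⟨mem_labels_node _ _ _ _ (Or.inr (Or.inr hc.1)),
          mem_labels_node _ _ _ _ (Or.inr (Or.inr hc.2))⟩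

end CP


namespace CP

lemma innerLabels_append (xs ys : List PTree) :
    innerLabels (xs ++ ys) = innerLabels xs ++ innerLabels ys := by
  induction xs with
  | nil => simp [innerLabels]
  | cons t xs ih => simp [innerLabels, ih]

lemma innerLabels_cons (a : ℕ) (cs rest : List PTree) :
    innerLabels (PTree.node a cs :: rest) = labelsList cs ++ innerLabels rest := by
  simp [innerLabels, PTree.children]

lemma lemD : ∀ N (ts : List PTree) (E' : Finset (ℕ × ℕ)),
    (labelsList ts).length ≤ N →
    (labelsList ts).Nodup →
    (∀ p ∈ E', p.1 ∉ innerLabels ts ∧ p.2 ∉ innerLabels ts) →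
    (∀ t ∈ ts, indeg E' t.label = 1) →
    Loopless E' → UniqueEulerTour E' →
    UniqueEulerTour (E' ∪ (gEdgesList ts).toFinset) ∧
      Loopless (E' ∪ (gEdgesList ts).toFinset) := by
  intro N
  induction N with
  | zero =>
    intro ts E' hlen hnd hfresh hind hloop hU
    cases ts with
    | nil => simpa [gEdgesList] using ⟨hU, hloop⟩
    | cons t rest =>
      exfalso
      cases t with
      | node a cs => simp [labelsList, labels_eq] at hlen
  | succ N ih =>
    intro ts E' hlen hnd hfresh hind hloop hU
    cases ts with
    | nil => simpa [gEdgesList] using ⟨hU, hloop⟩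
    | cons t rest =>
      cases t with
      | node a cs =>
      have hlen2 : (labelsList (cs ++ rest)).length ≤ N := by
        have := labelsList_length_cons a cs rest
        omega
      have hndeq : labelsList (PTree.node a cs :: rest)
          = a :: (labelsList cs ++ labelsList rest) := by
        simp [labelsList, labels_eq]
      have hnd' : (a :: (labelsList cs ++ labelsList rest)).Nodup := by rwa [hndeq] at hnd
      have hna : a ∉ labelsList cs ∧ a ∉ labelsList rest := by
        have := (List.nodup_cons.mp hnd').1
        simp at this
        tauto
      have hndtail : (labelsList cs ++ labelsList rest).Nodup := (List.nodup_cons.mp hnd').2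
      obtain ⟨hndcs, hndrest, hdisjlab⟩ := List.nodup_append.mp hndtail
      have hinnereq : innerLabels (PTree.node a cs :: rest)
          = labelsList cs ++ innerLabels rest := innerLabels_cons a cs rest
      by_cases hcs : cs = []
      · -- leaf child: no new edges
        subst hcs
        rw [gEdgesList_cons, gEdges_false_nil, List.nil_append]
        apply ih rest E'
        · simpa [labelsList] using hlen2
        · exact hndrest
        · intro p hp
          have := hfresh p hp
          rw [hinnereq] at this
          simp only [List.mem_append] at this
          exact ⟨fun h => this.1 (Or.inr h), fun h => this.2 (Or.inr h)⟩
        · intro u hu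
          exact hind u (List.mem_cons_of_mem _ hu)
        · exact hloop
        · exact hU
      · -- internal child: splice its cycle, then recurse
        have hmapne : cs.map PTree.label ≠ [] := by
          intro h
          exact hcs (List.map_eq_nil_iff.mp h)
        have hclsub : ∀ x ∈ cs.map PTree.label, x ∈ labelsList cs := fun x hx => map_label_sub hx
        have hclnd : (a :: cs.map PTree.label).Nodup := by
          rw [List.nodup_cons]
          exact ⟨fun h => hna.1 (hclsub _ h), map_label_nodup hndcs⟩
        have hfresh' : ∀ p ∈ E', p.1 ∉ cs.map PTree.label ∧ p.2 ∉ cs.map PTree.label := by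
          intro p hp
          have h2 := hfresh p hp
          rw [hinnereq] at h2
          simp only [List.mem_append] at h2
          exact ⟨fun h => h2.1 (Or.inl (hclsub _ h)), fun h => h2.2 (Or.inl (hclsub _ h))⟩
        have hindeg_a : indeg E' a = 1 := by
          have := hind (PTree.node a cs) List.mem_cons_self
          simpa [PTree.label] using this
        obtain ⟨hU'', hloop''⟩ := spliceLemma hmapne hclnd hfresh' hloop hindeg_a hU
        set cycF := (cyclicPairs (a :: cs.map PTree.label)).toFinset with hcycF
        set E'' := E' ∪ cycF with hE''
        have hcyccomp : ∀ p ∈ cycF, p.1 ∈ a :: cs.map PTree.label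
            ∧ p.2 ∈ a :: cs.map PTree.label := by
          intro p hp
          exact cp_mem_comp (List.mem_toFinset.mp hp)
        have hnotinner : ∀ x ∈ a :: cs.map PTree.label, x ∉ innerLabels (cs ++ rest) := by
          intro x hx
          rw [innerLabels_append, List.mem_append]
          rcases List.mem_cons.mp hx with rfl | hx
          · rintro (h | h)
            · exact hna.1 (inner_sub_labels h)
            · exact hna.2 (inner_sub_labels h)
          · rintro (h | h)
            · exact root_not_inner hndcs hx h
            · exact hdisjlab _ (hclsub _ hx) _ (inner_sub_labels h) rfl
        have main := ih (cs ++ rest) E''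
          hlen2
          (by rw [labelsList_append]; exact hndtail)
          (by
            intro p hp
            rcases Finset.mem_union.mp hp with h | h
            · have h2 := hfresh p h
              rw [hinnereq] at h2
              simp only [List.mem_append] at h2
              rw [innerLabels_append]
              simp only [List.mem_append]
              constructor
              · rintro (hh | hh)
                · exact h2.1 (Or.inl (inner_sub_labels hh))
                · exact h2.1 (Or.inr hh)
              · rintro (hh | hh)
                · exact h2.2 (Or.inl (inner_sub_labels hh))
                · exact h2.2 (Or.inr hh)
            · have h2 := hcyccomp p h
              exact ⟨hnotinner _ h2.1, hnotinner _ h2.2⟩)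
          (by
            intro u hu
            rcases List.mem_append.mp hu with hu | hu
            · -- u is a child of (node a cs)
              have hul : u.label ∈ cs.map PTree.label := List.mem_map_of_mem hu
              have hulcs : u.label ∈ labelsList cs := hclsub _ hul
              rw [hE'']
              rw [indeg_union_right (by
                intro p hp hc
                have h2 := hfresh p hp
                rw [hinnereq] at h2
                exact h2.2 (by rw [hc]; exact List.mem_append_left _ hulcs))]
              rw [hcycF]
              exact indeg_cyc hclnd (List.mem_cons_of_mem _ hul)
            · have hulrest : u.label ∈ labelsList rest :=
                mem_labelsList_of_mem hu (label_mem_labels u)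
              rw [hE'']
              rw [indeg_union_left (by
                intro p hp hc
                have h2 := (hcyccomp p hp).2
                rw [hc] at h2
                rcases List.mem_cons.mp h2 with h3 | h3
                · exact hna.2 (h3 ▸ hulrest)
                · exact hdisjlab _ (hclsub _ h3) _ hulrest rfl)]
              exact hind u (List.mem_cons_of_mem _ hu))
          hloop'' hU''
        have hfin : E' ∪ (gEdgesList (PTree.node a cs :: rest)).toFinset
            = E'' ∪ (gEdgesList (cs ++ rest)).toFinset := by
          rw [gEdgesList_cons, gEdges_false_eq a cs hcs, gEdgesList_append,
            List.toFinset_append, List.toFinset_append, List.toFinset_append,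
            hE'', hcycF]
          ext p
          simp only [Finset.mem_union]
          tauto
        rw [hfin]
        exact main

end CP


namespace CP

lemma gEdges_true_single (a : ℕ) (t : PTree) :
    gEdges true (PTree.node a [t]) = gEdges false t := by
  rw [gEdges]
  simp [gEdgesList]

lemma gEdges_true_eq (a : ℕ) (t : PTree) (ts : List PTree) (h : ts ≠ []) :
    gEdges true (PTree.node a (t :: ts))
      = cyclicPairs ((t :: ts).map PTree.label) ++ gEdgesList (t :: ts) := by
  rw [gEdges]
  have h1 : ¬((t :: ts).length ≤ 1) := by
    cases ts with
    | nil => exact absurd rfl h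
    | cons _ _ => simp
  simp [h1, h]

end CP

open CP in
theorem gDigraph_unique_euler' (n : ℕ) (hn : 2 ≤ n) (T : PTree) (hT : InL' n T) :
    UniqueEulerTour (gDigraph T) := by
  obtain ⟨⟨hnodup, hrange, hlab0, t', ts', hTeq, hlab1⟩, t, ts, hTeq2, h2⟩ := hT
  subst hTeq2
  have htt : t' = t ∧ ts' = ts := by
    cases hTeq
    exact ⟨rfl, rfl⟩
  rw [htt.1] at hlab1
  clear hTeq htt
  have hndAll : ((PTree.node 0 (t :: ts)).labels).Nodup := hnodup
  rw [labels_eq, List.nodup_cons] at hndAll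
  obtain ⟨h0notin, hndf⟩ := hndAll
  cases ts with
  | nil =>
    -- single child of the root
    cases t with
    | node b cs =>
    have hb : b = 1 := hlab1
    subst hb
    have hcs : cs ≠ [] := by
      intro h
      subst h
      simp [labels_eq, labelsList] at h2
    have hndt : (1 :: labelsList cs).Nodup := by
      have : labelsList [PTree.node 1 cs] = (1 :: labelsList cs) ++ [] := by
        simp [labelsList, labels_eq]
      rwa [this, List.append_nil] at hndf
    obtain ⟨h1notin, hndcs⟩ := List.nodup_cons.mp hndt
    have hclsub : ∀ x ∈ cs.map PTree.label, x ∈ labelsList cs := fun x hx => map_label_sub hx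
    have hclnd : (1 :: cs.map PTree.label).Nodup := by
      rw [List.nodup_cons]
      exact ⟨fun h => h1notin (hclsub _ h), map_label_nodup hndcs⟩
    have hlen2 : 2 ≤ (1 :: cs.map PTree.label).length := by
      cases cs with
      | nil => exact absurd rfl hcs
      | cons _ _ => simp
    obtain ⟨hUbase, hloopbase⟩ := cycle_unique hclnd hlen2
    have hmain := lemD (labelsList cs).length cs
      ((cyclicPairs (1 :: cs.map PTree.label)).toFinset)
      le_rfl hndcs
      (by
        intro p hp
        have hc := cp_mem_comp (List.mem_toFinset.mp hp)
        constructor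
        · rcases List.mem_cons.mp hc.1 with h | h
          · rw [h]; exact fun hh => h1notin (inner_sub_labels hh)
          · exact root_not_inner hndcs h
        · rcases List.mem_cons.mp hc.2 with h | h
          · rw [h]; exact fun hh => h1notin (inner_sub_labels hh)
          · exact root_not_inner hndcs h)
      (by
        intro u hu
        exact indeg_cyc hclnd (List.mem_cons_of_mem _ (List.mem_map_of_mem hu)))
      hloopbase hUbase
    have hE : gDigraph (PTree.node 0 [PTree.node 1 cs])
        = (cyclicPairs (1 :: cs.map PTree.label)).toFinset ∪ (gEdgesList cs).toFinset := by
      rw [gDigraph, gEdges_true_single, gEdges_false_eq 1 cs hcs, List.toFinset_append]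
    rw [hE]
    exact hmain.1
  | cons t2 ts2 =>
    have hts : (t2 :: ts2) ≠ [] := by simp
    have hr : ((t :: t2 :: ts2).map PTree.label).Nodup := map_label_nodup hndf
    have hlen2 : 2 ≤ ((t :: t2 :: ts2).map PTree.label).length := by simp
    obtain ⟨hUbase, hloopbase⟩ := cycle_unique hr hlen2
    have hmain := lemD (labelsList (t :: t2 :: ts2)).length (t :: t2 :: ts2)
      ((cyclicPairs ((t :: t2 :: ts2).map PTree.label)).toFinset)
      le_rfl hndf
      (by
        intro p hp
        have hc := cp_mem_comp (List.mem_toFinset.mp hp)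
        exact ⟨root_not_inner hndf hc.1, root_not_inner hndf hc.2⟩)
      (by
        intro u hu
        exact indeg_cyc hr (List.mem_map_of_mem hu))
      hloopbase hUbase
    have hE : gDigraph (PTree.node 0 (t :: t2 :: ts2))
        = (cyclicPairs ((t :: t2 :: ts2).map PTree.label)).toFinset
          ∪ (gEdgesList (t :: t2 :: ts2)).toFinset := by
      rw [gDigraph, gEdges_true_eq 0 t (t2 :: ts2) hts, List.toFinset_append]
    rw [hE]
    exact hmain.1


/-- For every `T ∈ L'ₙ`, the digraph `g(T)` has exactly one Eulerian tour up to cyclic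
shift. -/
theorem gDigraph_unique_euler (n : ℕ) (hn : 2 ≤ n) (T : PTree) (hT : InL' n T) :
    UniqueEulerTour (gDigraph T) :=
  gDigraph_unique_euler' n hn T hT
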